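/- Let D be a finite DAG with vertices partitioned into sources S, internal vertices I, and sinks T, let v be an internal vertex, and let i, j be vertices distinct from v. Then j is reachable from i in D/v if and only if j is reachable from i in D. In other words, vertex elimination preserves reachability among the remaining vertices. -/

import Mathlib

variable {V : Type*} [DecidableEq V] [Fintype V]

/-- In-neighborhood of `v` in the edge set `E`. -/
def inN (E : Finset (V × V)) (v : V) : Finset V :=
  (E.filter fun p => p.2 = v).image Prod.fst

/-- Out-neighborhood of `v` in the edge set `E`. -/
def outN (E : Finset (V × V)) (v : V) : Finset V :=
  (E.filter fun p => p.1 = v).image Prod.snd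

/-- Elimination of vertex `v`: delete `v` and add an edge from every in-neighbor
to every out-neighbor of `v` (if not already present). -/
def elimv (E : Finset (V × V)) (v : V) : Finset (V × V) :=
  (E ∪ (inN E v) ×ˢ (outN E v)).filter fun p => p.1 ≠ v ∧ p.2 ≠ v

/-- Eliminate a sequence of vertices, in order. -/
def elimSeq (E : Finset (V × V)) (σ : List V) : Finset (V × V) :=
  σ.foldl elimv E

/-- Markowitz degree of `v`: in-degree times out-degree. -/
def mark (E : Finset (V × V)) (v : V) : ℕ :=
  (inN E v).card * (outN E v).card

/-- Cost of an elimination sequence: sum of the Markowitz degrees at the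
time of each elimination. -/
def cost (E : Finset (V × V)) : List V → ℕ
  | [] => 0
  | v :: σ => mark E v + cost (elimv E v) σ

/-- The directed graph with edge set `E` is acyclic. -/
def Acyclic (E : Finset (V × V)) : Prop :=
  ∀ v : V, ¬ Relation.TransGen (fun a b => (a, b) ∈ E) v v

/-- `E` is an acyclic digraph whose vertices are partitioned into sources `S`
(no in-edges), internal vertices `I`, and sinks `T` (no out-edges). -/
def IsDAGPartition (E : Finset (V × V)) (S I T : Finset V) : Prop :=
  Acyclic E ∧ Disjoint S I ∧ Disjoint S T ∧ Disjoint I T ∧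
    S ∪ I ∪ T = Finset.univ ∧ (∀ s ∈ S, inN E s = ∅) ∧ (∀ t ∈ T, outN E t = ∅)

/-- There is a directed path from `i` to `j` all of whose internal vertices
lie in `X` (the single-edge path has no internal vertices). -/
def PathThrough (E : Finset (V × V)) (X : Finset V) (i j : V) : Prop :=
  ∃ l : List V, (∀ v ∈ l, v ∈ X) ∧ List.Chain' (fun a b => (a, b) ∈ E) (i :: (l ++ [j]))

lemma mem_elimv_iff {E : Finset (V × V)} {v a b : V} :
    (a, b) ∈ elimv E v ↔ (a ≠ v ∧ b ≠ v ∧ ((a, b) ∈ E ∨ ((a, v) ∈ E ∧ (v, b) ∈ E))) := by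
  simp only [elimv, inN, outN, Finset.mem_filter, Finset.mem_union, Finset.mem_product,
    Finset.mem_image, Prod.exists]
  constructor
  · rintro ⟨h, ha, hb⟩
    refine ⟨ha, hb, ?_⟩
    rcases h with h | ⟨⟨x, y, ⟨hxy, hy⟩, hx⟩, ⟨x', y', ⟨hxy', hx'⟩, hy'⟩⟩
    · exact Or.inl h
    · subst hy hx hx' hy'; exact Or.inr ⟨hxy, hxy'⟩
  · rintro ⟨ha, hb, h | ⟨h1, h2⟩⟩
    · exact ⟨Or.inl h, ha, hb⟩
    · exact ⟨Or.inr ⟨⟨a, v, ⟨h1, rfl⟩, rfl⟩, ⟨v, b, ⟨h2, rfl⟩, rfl⟩⟩, ha, hb⟩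

lemma elim_back {E : Finset (V × V)} {v : V} (hA : Acyclic E) :
    ∀ n (l : List V), l.length ≤ n → ∀ i j, i ≠ v → j ≠ v →
      List.Chain (fun a b => (a, b) ∈ E) i (l ++ [j]) →
      Relation.ReflTransGen (fun a b => (a, b) ∈ elimv E v) i j := by
  intro n
  induction n with
  | zero =>
    rintro (_ | ⟨b, l⟩) hl i j hi hj hc
    change List.IsChain _ (i :: _) at hc
    · rcases hc with _ | _ | ⟨h, _⟩
      exact Relation.ReflTransGen.single (mem_elimv_iff.2 ⟨hi, hj, Or.inl h⟩)
    · simp at hl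
  | succ n ih =>
    rintro (_ | ⟨b, l⟩) hl i j hi hj hc
    change List.IsChain _ (i :: _) at hc
    · rcases hc with _ | _ | ⟨h, _⟩
      exact Relation.ReflTransGen.single (mem_elimv_iff.2 ⟨hi, hj, Or.inl h⟩)
    · rcases hc with _ | _ | ⟨hib, hc⟩
      by_cases hb : v = b
      · subst hb
        cases l with
        | nil =>
          rcases hc with _ | _ | ⟨hbj, _⟩
          exact Relation.ReflTransGen.single (mem_elimv_iff.2 ⟨hi, hj, Or.inr ⟨hib, hbj⟩⟩)
        | cons c rest =>
          rcases hc with _ | _ | ⟨hvc, hc⟩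
          have hcv : c ≠ v := fun h => hA v (Relation.TransGen.single (h ▸ hvc))
          refine Relation.ReflTransGen.head
            (mem_elimv_iff.2 ⟨hi, hcv, Or.inr ⟨hib, hvc⟩⟩) ?_
          refine ih rest ?_ c j hcv hj hc
          simp at hl; omega
      · refine Relation.ReflTransGen.head
          (mem_elimv_iff.2 ⟨hi, Ne.symm hb, Or.inl hib⟩) ?_
        refine ih l ?_ b j (Ne.symm hb) hj hc
        simp at hl; omega

/-- vertex elimination preserves reachability among the
remaining vertices. -/
theorem elimv_preserves_reachability (E : Finset (V × V)) (S I T : Finset V)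
    (hD : IsDAGPartition E S I T) (v : V) (hv : v ∈ I)
    (i j : V) (hi : i ≠ v) (hj : j ≠ v) :
    Relation.ReflTransGen (fun a b => (a, b) ∈ elimv E v) i j ↔
      Relation.ReflTransGen (fun a b => (a, b) ∈ E) i j := by
  obtain ⟨hA, -⟩ := hD
  constructor
  · intro h
    clear hj
    induction h with
    | refl => exact .refl
    | tail _ hab ih =>
      rcases mem_elimv_iff.1 hab with ⟨_, _, h' | ⟨h1, h2⟩⟩
      · exact ih.tail h'
      · exact (ih.tail h1).tail h2
  · intro h
    obtain ⟨l, hc, hlast⟩ := List.exists_isChain_cons_of_relationReflTransGen h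
    cases l with
    | nil => simp at hlast; exact hlast ▸ Relation.ReflTransGen.refl
    | cons a l' =>
      have hne : (a :: l') ≠ [] := by simp
      have hlast' : (a :: l').getLast hne = j := by
        rw [List.getLast_cons hne] at hlast; exact hlast
      have : a :: l' = (a :: l').dropLast ++ [j] := by
        rw [← hlast']; exact (List.dropLast_append_getLast hne).symm
      rw [this] at hc
      exact elim_back hA _ _ le_rfl i j hi hj hc
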